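/- Let H : ℝⁿ → ℝ be convex, twice continuously differentiable, and satisfy H(0) = 0, ∇H(0) = 0, and positive definiteness of the Hessian of H at 0 (i.e., ⟨v, D(∇H)(0) v⟩ > 0 for all v ≠ 0). Let J, R : ℝⁿ → ℝⁿˣⁿ be continuous, assigning to each x a skew-symmetric matrix J(x) and a symmetric positive definite matrix R(x) (i.e., vᵀ R(x) v > 0 for all v ≠ 0 and all x). Then the equilibrium x = 0 of the unforced port-Hamiltonian system is globally asymptotically attracting: every solution x : [t₀, ∞) → ℝⁿ of ẋ(t) = (J(x(t)) − R(x(t))) ∇H(x(t)) converges to 0, i.e., x(t) → 0 as t → ∞. -/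

import Mathlib

open Matrix RealInnerProductSpace Filter

variable {n : ℕ}
local notation "E" n => EuclideanSpace ℝ (Fin n)

lemma fderiv_apply_eq_inner (f : (E n) → ℝ) (x v : E n) :
    fderiv ℝ f x v = ⟪gradient f x, v⟫ := by
  rw [← InnerProductSpace.toDual_apply_apply]
  rw [gradient, (InnerProductSpace.toDual ℝ (E n)).apply_symm_apply]

lemma inner_eq_dot (u v : E n) : ⟪u, v⟫ = (u : Fin n → ℝ) ⬝ᵥ (v : Fin n → ℝ) := by
  simp [PiLp.inner_apply, dotProduct, mul_comm]

-- gradient inequality for convex differentiable functions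
lemma grad_ineq (f : (E n) → ℝ) (hconv : ConvexOn ℝ Set.univ f)
    (hdiff : Differentiable ℝ f) (a b : E n) :
    f a + ⟪gradient f a, b - a⟫ ≤ f b := by
  have hφ : HasDerivAt (fun s : ℝ => f (a + s • (b - a))) (fderiv ℝ f a (b - a)) 0 := by
    have h1 : HasDerivAt (fun s : ℝ => a + s • (b - a)) (b - a) 0 := by
      simpa using ((hasDerivAt_id (0:ℝ)).smul_const (b - a)).const_add a
    have h2 : HasFDerivAt f (fderiv ℝ f a) (a + (0:ℝ) • (b - a)) := by
      simpa using (hdiff a).hasFDerivAt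
    exact h2.comp_hasDerivAt 0 h1
  have hc : ConvexOn ℝ Set.univ (fun s : ℝ => f (a + s • (b - a))) := by
    have := hconv.comp_affineMap (AffineMap.lineMap a b)
    have he : ∀ s : ℝ, (AffineMap.lineMap a b) s = a + s • (b - a) := by
      intro s; rw [AffineMap.lineMap_apply_module']; abel
    have heq : (f ∘ ⇑(AffineMap.lineMap a b)) = fun s : ℝ => f (a + s • (b - a)) := by
      funext s; simp [Function.comp, he]
    rw [heq] at this
    simpa [Set.preimage_univ] using this
  have := hc.le_slope_of_hasDerivAt (Set.mem_univ 0) (Set.mem_univ 1) one_pos hφ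
  rw [slope_def_field] at this
  simp only [zero_smul, add_zero, one_smul] at this hφ
  have h2 : f a + fderiv ℝ f a (b - a) ≤ f (a + (b - a)) := by
    have : fderiv ℝ f a (b - a) ≤ f (a + (b-a)) - f a := by
      simpa [div_one] using this
    linarith
  rw [fderiv_apply_eq_inner] at h2
  simpa using h2

lemma grad_continuous (f : EuclideanSpace ℝ (Fin n) → ℝ) (hf : ContDiff ℝ 2 f) :
    Continuous (gradient f) := by
  have h1 : Continuous (fderiv ℝ f) := (hf.fderiv_right (m := 1) (by norm_num)).continuous
  exact (InnerProductSpace.toDual ℝ (EuclideanSpace ℝ (Fin n))).symm.continuous.comp h1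

lemma grad_diff (f : EuclideanSpace ℝ (Fin n) → ℝ) (hf : ContDiff ℝ 2 f) :
    DifferentiableAt ℝ (gradient f) 0 := by
  have h1 : DifferentiableAt ℝ (fderiv ℝ f) 0 :=
    ((hf.fderiv_right (m := 1) (by norm_num)).differentiable (by norm_num)) 0
  exact ((InnerProductSpace.toDual ℝ (EuclideanSpace ℝ (Fin n))).symm.toContinuousLinearEquiv.differentiableAt).comp 0 h1

lemma inner_grad_pos (hn : 0 < n) (f : EuclideanSpace ℝ (Fin n) → ℝ)
    (hf : ContDiff ℝ 2 f) (hgrad0 : gradient f 0 = 0)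
    (hhess : ∀ v : EuclideanSpace ℝ (Fin n), v ≠ 0 → 0 < ⟪v, fderiv ℝ (gradient f) 0 v⟫) :
    ∃ ε > 0, ∀ v : EuclideanSpace ℝ (Fin n), v ≠ 0 → ‖v‖ ≤ ε → 0 < ⟪gradient f v, v⟫ := by
  haveI : Nontrivial (EuclideanSpace ℝ (Fin n)) := by
    refine nontrivial_of_ne (EuclideanSpace.single ⟨0, hn⟩ (1:ℝ)) 0 ?_
    intro h
    have := congrArg norm h
    rw [EuclideanSpace.norm_single] at this
    simp at this
  set A := fderiv ℝ (gradient f) 0 with hA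
  have hQ : Continuous (fun v : EuclideanSpace ℝ (Fin n) => ⟪v, A v⟫) :=
    continuous_id.inner A.continuous
  obtain ⟨u0, hu0, hmin⟩ := (isCompact_sphere (0 : EuclideanSpace ℝ (Fin n)) 1).exists_isMinOn
    (NormedSpace.sphere_nonempty.mpr zero_le_one) hQ.continuousOn
  have hu0norm : ‖u0‖ = 1 := by simpa using hu0
  set c := ⟪u0, A u0⟫ with hc
  have hcpos : 0 < c := hhess u0 (by intro h; rw [h] at hu0norm; simp at hu0norm)
  have hQv : ∀ v : EuclideanSpace ℝ (Fin n), c * ‖v‖ ^ 2 ≤ ⟪v, A v⟫ := by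
    intro v
    rcases eq_or_ne v 0 with rfl | hv
    · simp
    · have hvn : (0:ℝ) < ‖v‖ := norm_pos_iff.mpr hv
      have humem : (‖v‖⁻¹ • v) ∈ Metric.sphere (0 : EuclideanSpace ℝ (Fin n)) 1 := by
        simp [norm_smul, abs_of_pos (inv_pos.mpr hvn), inv_mul_cancel₀ hvn.ne']
      have h1 : c ≤ ⟪‖v‖⁻¹ • v, A (‖v‖⁻¹ • v)⟫ := hmin humem
      rw [A.map_smul, real_inner_smul_left, real_inner_smul_right] at h1
      have h2 : c * ‖v‖ ^ 2 ≤ ‖v‖⁻¹ * (‖v‖⁻¹ * ⟪v, A v⟫) * ‖v‖ ^ 2 :=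
        mul_le_mul_of_nonneg_right h1 (sq_nonneg _)
      calc c * ‖v‖ ^ 2 ≤ ‖v‖⁻¹ * (‖v‖⁻¹ * ⟪v, A v⟫) * ‖v‖ ^ 2 := h2
        _ = (‖v‖⁻¹ * ‖v‖) * ((‖v‖⁻¹ * ‖v‖) * ⟪v, A v⟫) := by rw [sq]; ring
        _ = ⟪v, A v⟫ := by rw [inv_mul_cancel₀ hvn.ne']; ring
  have hlo := (grad_diff f hf).hasFDerivAt.isLittleO
  simp only [hgrad0, sub_zero] at hlo
  have hev := hlo.def (half_pos hcpos)
  rw [Metric.eventually_nhds_iff] at hev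
  obtain ⟨ε, hε, hball⟩ := hev
  refine ⟨ε / 2, half_pos hε, fun v hv hvle => ?_⟩
  have hvn : (0:ℝ) < ‖v‖ := norm_pos_iff.mpr hv
  have hdist : dist v 0 < ε := by
    rw [dist_zero_right]; linarith
  have hsmall : ‖gradient f v - A v‖ ≤ c / 2 * ‖v‖ := by simpa using hball hdist
  have h3 : ⟪gradient f v, v⟫ = ⟪A v, v⟫ + ⟪gradient f v - A v, v⟫ := by
    rw [inner_sub_left]; ring
  have h4 : |⟪gradient f v - A v, v⟫| ≤ ‖gradient f v - A v‖ * ‖v‖ := abs_real_inner_le_norm _ _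
  have h5 : ⟪A v, v⟫ = ⟪v, A v⟫ := real_inner_comm _ _
  have h6 := hQv v
  have h7 : ‖gradient f v - A v‖ * ‖v‖ ≤ c / 2 * ‖v‖ * ‖v‖ :=
    mul_le_mul_of_nonneg_right hsmall (norm_nonneg _)
  rw [h3, h5]
  have hsq : ‖v‖ ^ 2 = ‖v‖ * ‖v‖ := sq ‖v‖
  nlinarith [abs_le.mp h4, mul_pos hvn hvn, hcpos]
lemma H_nonneg (f : EuclideanSpace ℝ (Fin n) → ℝ) (hconv : ConvexOn ℝ Set.univ f)
    (hdiff : Differentiable ℝ f) (h0 : f 0 = 0) (hgrad0 : gradient f 0 = 0) :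
    ∀ b, 0 ≤ f b := by
  intro b
  have := grad_ineq f hconv hdiff 0 b
  simpa [h0, hgrad0] using this

lemma H_pos (f : EuclideanSpace ℝ (Fin n) → ℝ) (hconv : ConvexOn ℝ Set.univ f)
    (hdiff : Differentiable ℝ f) (h0 : f 0 = 0) (hgrad0 : gradient f 0 = 0)
    {ε : ℝ} (hε : 0 < ε)
    (hquad : ∀ v : EuclideanSpace ℝ (Fin n), v ≠ 0 → ‖v‖ ≤ ε → 0 < ⟪gradient f v, v⟫) :
    ∀ v : EuclideanSpace ℝ (Fin n), v ≠ 0 → 0 < f v := by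
  have hsmall : ∀ w : EuclideanSpace ℝ (Fin n), w ≠ 0 → ‖w‖ ≤ ε → 0 < f w := by
    intro w hw hwle
    have hhalf : ((1:ℝ)/2) • w ≠ 0 := by
      simp [smul_eq_zero, hw]
    have hhalfnorm : ‖((1:ℝ)/2) • w‖ ≤ ε := by
      rw [norm_smul, Real.norm_eq_abs, abs_of_pos (by norm_num : (0:ℝ) < 1/2)]
      linarith [norm_nonneg w]
    have h1 := grad_ineq f hconv hdiff (((1:ℝ)/2) • w) w
    have h2 : w - ((1:ℝ)/2) • w = ((1:ℝ)/2) • w := by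
      rw [sub_eq_iff_eq_add, ← add_smul]; norm_num
    rw [h2] at h1
    have h3 := hquad _ hhalf hhalfnorm
    have h4 := H_nonneg f hconv hdiff h0 hgrad0 (((1:ℝ)/2) • w)
    linarith
  intro v hv
  have hvn : (0:ℝ) < ‖v‖ := norm_pos_iff.mpr hv
  set s : ℝ := min 1 (ε / ‖v‖) with hs
  have hspos : 0 < s := lt_min one_pos (div_pos hε hvn)
  have hsle : s ≤ 1 := min_le_left _ _
  have hsv : s • v ≠ 0 := smul_ne_zero hspos.ne' hv
  have hsvnorm : ‖s • v‖ ≤ ε := by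
    rw [norm_smul, Real.norm_eq_abs, abs_of_pos hspos]
    calc s * ‖v‖ ≤ (ε / ‖v‖) * ‖v‖ := mul_le_mul_of_nonneg_right (min_le_right _ _) (norm_nonneg _)
      _ = ε := div_mul_cancel₀ _ hvn.ne'
  have hcvx := hconv.2 (Set.mem_univ v) (Set.mem_univ 0) hspos.le (by linarith : (0:ℝ) ≤ 1 - s)
    (by ring : s + (1 - s) = 1)
  simp only [smul_zero, add_zero, smul_eq_mul, h0, mul_zero] at hcvx
  have h5 := hsmall _ hsv hsvnorm
  nlinarith

lemma sublevel_bounded (hn : 0 < n) (f : EuclideanSpace ℝ (Fin n) → ℝ)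
    (hconv : ConvexOn ℝ Set.univ f) (hf : ContDiff ℝ 2 f)
    (h0 : f 0 = 0) (hgrad0 : gradient f 0 = 0)
    {ε : ℝ} (hε : 0 < ε)
    (hpos : ∀ v : EuclideanSpace ℝ (Fin n), v ≠ 0 → 0 < f v)
    (c₀ : ℝ) :
    ∃ ρ > 0, ∀ z : EuclideanSpace ℝ (Fin n), f z ≤ c₀ → ‖z‖ ≤ ρ := by
  haveI : Nontrivial (EuclideanSpace ℝ (Fin n)) := by
    refine nontrivial_of_ne (EuclideanSpace.single ⟨0, hn⟩ (1:ℝ)) 0 ?_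
    intro h
    have := congrArg norm h
    rw [EuclideanSpace.norm_single] at this
    simp at this
  obtain ⟨w0, hw0, hminw⟩ := (isCompact_sphere (0 : EuclideanSpace ℝ (Fin n)) ε).exists_isMinOn
    (NormedSpace.sphere_nonempty.mpr hε.le) (hf.continuous.continuousOn)
  have hw0norm : ‖w0‖ = ε := by simpa using hw0
  set δ := f w0 with hδ
  have hδpos : 0 < δ := hpos w0 (by intro h; rw [h] at hw0norm; simp at hw0norm; linarith)
  refine ⟨max ε (ε * c₀ / δ), lt_max_iff.mpr (Or.inl hε), fun z hz => ?_⟩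
  rcases le_or_gt ‖z‖ ε with h | h
  · exact h.trans (le_max_left _ _)
  · have hzn : (0:ℝ) < ‖z‖ := lt_trans hε h
    set s : ℝ := ε / ‖z‖ with hs
    have hspos : 0 < s := div_pos hε hzn
    have hsle : s ≤ 1 := by
      rw [hs, div_le_one hzn]; exact h.le
    have hsznorm : ‖s • z‖ = ε := by
      rw [norm_smul, Real.norm_eq_abs, abs_of_pos hspos, hs, div_mul_cancel₀ _ hzn.ne']
    have hmem : s • z ∈ Metric.sphere (0 : EuclideanSpace ℝ (Fin n)) ε := by
      simpa using hsznorm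
    have h1 : δ ≤ f (s • z) := hminw hmem
    have hcvx := hconv.2 (Set.mem_univ z) (Set.mem_univ 0) hspos.le (by linarith : (0:ℝ) ≤ 1 - s)
      (by ring : s + (1 - s) = 1)
    simp only [smul_zero, add_zero, smul_eq_mul, h0, mul_zero] at hcvx
    have h2 : δ ≤ s * f z := le_trans h1 hcvx
    have h3 : ‖z‖ * δ ≤ ε * f z := by
      have := mul_le_mul_of_nonneg_left h2 hzn.le
      calc ‖z‖ * δ ≤ ‖z‖ * (s * f z) := this
        _ = (s * ‖z‖) * f z := by ring
        _ = ε * f z := by rw [hs, div_mul_cancel₀ _ hzn.ne']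
    have h4 : ‖z‖ ≤ ε * f z / δ := (le_div_iff₀ hδpos).mpr h3
    have h5 : ε * f z / δ ≤ ε * c₀ / δ := by
      gcongr
    exact le_trans (h4.trans h5) (le_max_right _ _)
/-- The gradient of a function on `ℝⁿ` (Euclidean space), via Mathlib's `gradient`. -/
noncomputable def grad {n : ℕ} (H : EuclideanSpace ℝ (Fin n) → ℝ) :
    EuclideanSpace ℝ (Fin n) → EuclideanSpace ℝ (Fin n) := gradient H

/-- The coercion from Euclidean space to plain functions `Fin n → ℝ`. -/
def toPi {n : ℕ} (v : EuclideanSpace ℝ (Fin n)) : Fin n → ℝ := v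

@[simp] lemma toPi_zero {n : ℕ} : toPi (0 : EuclideanSpace ℝ (Fin n)) = 0 := rfl

@[simp] lemma toPi_apply {n : ℕ} (v : EuclideanSpace ℝ (Fin n)) (i : Fin n) :
    toPi v i = v i := rfl

lemma skew_dot {M : Matrix (Fin n) (Fin n) ℝ} (hM : Mᵀ = -M) (v : Fin n → ℝ) :
    v ⬝ᵥ M *ᵥ v = 0 := by
  have h1 : v ⬝ᵥ M *ᵥ v = Matrix.vecMul v M ⬝ᵥ v := Matrix.dotProduct_mulVec v M v
  have h2 : Matrix.vecMul v M = Mᵀ *ᵥ v := (Matrix.mulVec_transpose M v).symm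
  rw [h2, hM, Matrix.neg_mulVec, neg_dotProduct] at h1
  have h3 : v ⬝ᵥ M *ᵥ v = M *ᵥ v ⬝ᵥ v := dotProduct_comm _ _
  linarith

/-- For a convex, twice continuously differentiable Hamiltonian `H`
with `H(0) = 0`, `∇H(0) = 0`, and positive definite Hessian at `0`, and continuous
`J`, `R` with `J(x)` skew-symmetric and `R(x)` symmetric positive definite, every
solution of the unforced port-Hamiltonian system `ẋ = (J(x) - R(x)) ∇H(x)` on
`[t₀, ∞)` converges to `0` as `t → ∞`. -/
theorem phs_equilibrium_globally_attracting {n : ℕ}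
    (H : EuclideanSpace ℝ (Fin n) → ℝ)
    (hconv : ConvexOn ℝ Set.univ H)
    (hsmooth : ContDiff ℝ 2 H)
    (h0 : H 0 = 0)
    (hgrad0 : grad H 0 = 0)
    (hhess : ∀ v : EuclideanSpace ℝ (Fin n), v ≠ 0 → 0 < ⟪v, fderiv ℝ (grad H) 0 v⟫)
    (J R : EuclideanSpace ℝ (Fin n) → Matrix (Fin n) (Fin n) ℝ)
    (hJcont : Continuous J) (hRcont : Continuous R)
    (hJ : ∀ y, (J y)ᵀ = -(J y))
    (hRsym : ∀ y, (R y)ᵀ = R y)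
    (hRpd : ∀ y, ∀ v : Fin n → ℝ, v ≠ 0 → 0 < v ⬝ᵥ (R y).mulVec v)
    (t₀ : ℝ) (x : ℝ → EuclideanSpace ℝ (Fin n))
    (hx : ∀ t : ℝ, t₀ ≤ t →
      HasDerivAt x (WithLp.toLp 2 ((J (x t) - R (x t)).mulVec (grad H (x t)))) t) :
    Tendsto x atTop (nhds 0) := by
  rcases Nat.eq_zero_or_pos n with hn | hn
  · subst hn
    haveI : Subsingleton (EuclideanSpace ℝ (Fin 0)) :=
      ⟨fun a b => PiLp.ext fun i => i.elim0⟩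
    have hxz : x = fun _ => 0 := funext fun t => Subsingleton.elim _ _
    rw [hxz]
    exact tendsto_const_nhds
  -- basic facts
  have hdiff : Differentiable ℝ H := hsmooth.differentiable (by norm_num)
  have hgrad0' : gradient H 0 = 0 := hgrad0
  obtain ⟨ε, hε, hquad⟩ := inner_grad_pos hn H hsmooth hgrad0' (fun v hv => hhess v hv)
  have hpos := H_pos H hconv hdiff h0 hgrad0' hε hquad
  have hH0 := H_nonneg H hconv hdiff h0 hgrad0'
  have hgc : Continuous (gradient H) := grad_continuous H hsmooth
  -- the Lyapunov function and dissipation rate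
  set V : ℝ → ℝ := fun t => H (x t) with hV
  set W : EuclideanSpace ℝ (Fin n) → ℝ :=
    fun z => toPi (gradient H z) ⬝ᵥ (R z).mulVec (toPi (gradient H z)) with hW
  have hWnonneg : ∀ z, 0 ≤ W z := by
    intro z
    simp only [hW]
    rcases eq_or_ne (gradient H z) 0 with hg | hg
    · rw [hg]
      simp [zero_dotProduct]
    · exact (hRpd z _ (fun h => hg (PiLp.ext fun i => congrFun h i))).le
  have hVderiv : ∀ t, t₀ ≤ t → HasDerivAt V (-(W (x t))) t := by
    intro t ht
    have hx' := hx t ht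
    have h1 : HasDerivAt V
        (fderiv ℝ H (x t) (WithLp.toLp 2 ((J (x t) - R (x t)).mulVec (toPi (gradient H (x t)))))) t :=
      (hdiff (x t)).hasFDerivAt.comp_hasDerivAt t hx'
    have h2 : fderiv ℝ H (x t) (WithLp.toLp 2 ((J (x t) - R (x t)).mulVec (toPi (gradient H (x t)))))
        = -(W (x t)) := by
      rw [fderiv_apply_eq_inner, inner_eq_dot]
      show toPi (gradient H (x t)) ⬝ᵥ (J (x t) - R (x t)).mulVec (toPi (gradient H (x t)))
          = -(W (x t))
      rw [Matrix.sub_mulVec, dotProduct_sub, skew_dot (hJ (x t))]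
      simp [hW]
    rwa [h2] at h1
  have hVcont : ContinuousOn V (Set.Ici t₀) :=
    fun t ht => ((hVderiv t ht).continuousAt.continuousWithinAt)
  have hVanti : AntitoneOn V (Set.Ici t₀) := by
    apply antitoneOn_of_deriv_nonpos (convex_Ici t₀) hVcont
    · intro t ht
      rw [interior_Ici] at ht
      exact ((hVderiv t ht.le).differentiableAt).differentiableWithinAt
    · intro t ht
      rw [interior_Ici] at ht
      rw [(hVderiv t ht.le).deriv]
      simpa using hWnonneg (x t)
  set c₀ : ℝ := V t₀ with hc₀
  have hc₀0 : 0 ≤ c₀ := hH0 (x t₀)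
  have hVle : ∀ t, t₀ ≤ t → V t ≤ c₀ :=
    fun t ht => hVanti Set.self_mem_Ici ht ht
  obtain ⟨ρ, hρ, hball⟩ := sublevel_bounded hn H hconv hsmooth h0 hgrad0' hε hpos c₀
  -- the limit L of V
  set Vb : ℝ → ℝ := fun t => V (max t t₀) with hVb
  have hVbanti : Antitone Vb := fun s t hst =>
    hVanti (Set.mem_Ici.mpr (le_max_right s t₀)) (Set.mem_Ici.mpr (le_max_right t t₀))
      (max_le_max hst le_rfl)
  have hbdd : BddBelow (Set.range Vb) := by
    refine ⟨0, fun y hy => ?_⟩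
    obtain ⟨t, rfl⟩ := hy
    exact hH0 _
  set L : ℝ := ⨅ t, Vb t with hLdef
  have hLtend : Tendsto Vb atTop (nhds L) := tendsto_atTop_ciInf hVbanti hbdd
  have hLV : ∀ t, t₀ ≤ t → L ≤ V t := by
    intro t ht
    have := ciInf_le hbdd t
    have h2 : L ≤ V (max t t₀) := this
    rwa [max_eq_left ht] at h2
  have hL0 : 0 ≤ L := le_ciInf fun t => hH0 _
  have hVtendL : Tendsto V atTop (nhds L) := by
    apply hLtend.congr'
    filter_upwards [eventually_ge_atTop t₀] with t ht
    show V (max t t₀) = V t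
    rw [max_eq_left ht]
  -- show L = 0
  have hLzero : L = 0 := by
    by_contra hLne
    have hLpos : 0 < L := lt_of_le_of_ne hL0 (Ne.symm hLne)
    set A : Set (EuclideanSpace ℝ (Fin n)) := {z | L ≤ H z ∧ H z ≤ c₀} with hA
    have hAclosed : IsClosed A :=
      (isClosed_le continuous_const hsmooth.continuous).inter
        (isClosed_le hsmooth.continuous continuous_const)
    have hAsub : A ⊆ Metric.closedBall 0 ρ := by
      intro z hz
      rw [Metric.mem_closedBall, dist_zero_right]
      exact hball z hz.2
    have hAcomp : IsCompact A :=
      (isCompact_closedBall (0 : EuclideanSpace ℝ (Fin n)) ρ).of_isClosed_subset hAclosed hAsub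
    have hAne : A.Nonempty := ⟨x t₀, hLV t₀ le_rfl, le_rfl⟩
    have hWcont : Continuous W := by
      rw [hW]
      simp only [Matrix.mulVec, dotProduct]
      refine continuous_finset_sum _ fun i _ => ((continuous_apply i).comp ((PiLp.continuous_ofLp 2 _).comp hgc)).mul
        (continuous_finset_sum _ fun j _ =>
          (((continuous_apply j).comp ((continuous_apply i).comp hRcont)).mul
            ((continuous_apply j).comp ((PiLp.continuous_ofLp 2 _).comp hgc))))
    obtain ⟨z₀, hz₀A, hminW⟩ := hAcomp.exists_isMinOn hAne hWcont.continuousOn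
    have hgz₀ : gradient H z₀ ≠ 0 := by
      intro hg
      have := grad_ineq H hconv hdiff z₀ 0
      rw [hg] at this
      simp [h0] at this
      have := hz₀A.1
      linarith
    have hcW : 0 < W z₀ := hRpd z₀ _ (fun h => hgz₀ (PiLp.ext fun i => congrFun h i))
    have hmemA : ∀ t, t₀ ≤ t → x t ∈ A := fun t ht => ⟨hLV t ht, hVle t ht⟩
    -- U := V + W z₀ * t is antitone
    set U : ℝ → ℝ := fun t => V t + W z₀ * t with hU
    have hUderiv : ∀ t, t₀ ≤ t → HasDerivAt U (-(W (x t)) + W z₀) t := by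
      intro t ht
      exact (hVderiv t ht).add (by simpa using (hasDerivAt_id t).const_mul (W z₀))
    have hUanti : AntitoneOn U (Set.Ici t₀) := by
      apply antitoneOn_of_deriv_nonpos (convex_Ici t₀)
        (fun t ht => ((hUderiv t ht).continuousAt.continuousWithinAt))
      · intro t ht
        rw [interior_Ici] at ht
        exact ((hUderiv t ht.le).differentiableAt).differentiableWithinAt
      · intro t ht
        rw [interior_Ici] at ht
        rw [(hUderiv t ht.le).deriv]
        have h : W z₀ ≤ W (x t) := hminW (hmemA t ht.le)
        linarith
    set T : ℝ := t₀ + (c₀ + 1) / W z₀ with hT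
    have hTge : t₀ ≤ T := by
      rw [hT]
      have : 0 < (c₀ + 1) / W z₀ := div_pos (by linarith) hcW
      linarith
    have h1 : U T ≤ U t₀ := hUanti Set.self_mem_Ici hTge hTge
    have h2 : 0 ≤ V T := hH0 _
    rw [hU] at h1
    simp only [] at h1
    have h3 : W z₀ * T = W z₀ * t₀ + (c₀ + 1) := by
      rw [hT]; field_simp
    rw [h3] at h1
    have : V t₀ = c₀ := rfl
    linarith
  rw [hLzero] at hVtendL
  -- conclude
  rw [show (0 : EuclideanSpace ℝ (Fin n)) = 0 from rfl]
  apply NormedAddCommGroup.tendsto_nhds_zero.mpr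
  intro ε' hε'
  set S : Set (EuclideanSpace ℝ (Fin n)) := {z | H z ≤ c₀ ∧ ε' ≤ ‖z‖} with hS
  rcases S.eq_empty_or_nonempty with hSe | hSne
  · filter_upwards [eventually_ge_atTop t₀] with t ht
    by_contra hcon
    push_neg at hcon
    have : x t ∈ S := ⟨hVle t ht, hcon⟩
    rw [hSe] at this
    exact this
  · have hSclosed : IsClosed S :=
      (isClosed_le hsmooth.continuous continuous_const).inter
        (isClosed_le continuous_const continuous_norm)
    have hScomp : IsCompact S :=
      (isCompact_closedBall (0 : EuclideanSpace ℝ (Fin n)) ρ).of_isClosed_subset hSclosed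
        (fun z hz => by rw [Metric.mem_closedBall, dist_zero_right]; exact hball z hz.1)
    obtain ⟨z₁, hz₁S, hminH⟩ := hScomp.exists_isMinOn hSne hsmooth.continuous.continuousOn
    have hz₁ne : z₁ ≠ 0 := by
      intro h
      have := hz₁S.2
      rw [h] at this
      simp at this
      linarith
    have hm : 0 < H z₁ := hpos z₁ hz₁ne
    have hev : ∀ᶠ t in atTop, V t < H z₁ := (tendsto_order.1 hVtendL).2 _ hm
    filter_upwards [hev, eventually_ge_atTop t₀] with t ht1 ht2
    by_contra hcon
    push_neg at hcon
    have hmemS : x t ∈ S := ⟨hVle t ht2, hcon⟩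
    have := hminH hmemS
    exact absurd (lt_of_le_of_lt this ht1) (lt_irrefl _)
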